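/- arXiv:1906.01027 — 2 statements merged into one kernel-verified Lean document; each statement's English description precedes it below -/
import Mathlib

section
/- Let u : ℝ × ℝ → ℝ, u = u(t,x), be a C³ solution of the dissipative Camassa–Holm-type equation. Assume that for every t ≥ 0: the functions x ↦ u(t,x) and x ↦ ∂_t u(t,x) are integrable on ℝ; the flux Φ(t,x) := (3/2)u² - u_{tx} - u u_{xx} - (1/2)u_x² - α u - (β/3)u³ - (γ/4)u⁴ - Γ u_{xx} - λ u_x tends to 0 as x → ±∞ and x ↦ ∂_x Φ(t,x) is integrable; and the function t ↦ ∫_ℝ u(t,x) dx is differentiable with derivative ∫_ℝ ∂_t u(t,x) dx. Then for all t ≥ 0: ∫_ℝ u(t,x) dx = e^{-λ t} ∫_ℝ u(0,x) dx. -/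
open MeasureTheory Filter

/-- Partial derivative with respect to the first (time) variable of a curried
function `u : ℝ → ℝ → ℝ`, `u = u t x`. -/
noncomputable def pt (u : ℝ → ℝ → ℝ) : ℝ → ℝ → ℝ := fun t x => deriv (fun s => u s x) t

/-- Partial derivative with respect to the second (space) variable of a curried
function `u : ℝ → ℝ → ℝ`, `u = u t x`. -/
noncomputable def px (u : ℝ → ℝ → ℝ) : ℝ → ℝ → ℝ := fun t x => deriv (fun y => u t y) x

/-- The flux `Φ` of the first conservation law of the dissipative
Camassa–Holm-type equation. -/
noncomputable def Phi (lam α β γ Γ : ℝ) (u : ℝ → ℝ → ℝ) : ℝ → ℝ → ℝ := fun t x =>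
  (3 / 2) * (u t x) ^ 2 - px (pt u) t x - u t x * px (px u) t x
    - (1 / 2) * (px u t x) ^ 2 - α * u t x - (β / 3) * (u t x) ^ 3
    - (γ / 4) * (u t x) ^ 4 - Γ * px (px u) t x - lam * px u t x

lemma keyx (G : ℝ × ℝ → ℝ) (hG : Differentiable ℝ G) (t x : ℝ) :
    HasDerivAt (fun y => G (t, y)) (fderiv ℝ G (t, x) (0, 1)) x := by
  have hc : HasDerivAt (fun y : ℝ => ((t, y) : ℝ × ℝ)) ((0 : ℝ), (1 : ℝ)) x :=
    (hasDerivAt_const x t).prodMk (hasDerivAt_id x)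
  exact (hG (t, x)).hasFDerivAt.comp_hasDerivAt x hc

lemma keyt (G : ℝ × ℝ → ℝ) (hG : Differentiable ℝ G) (t x : ℝ) :
    HasDerivAt (fun s => G (s, x)) (fderiv ℝ G (t, x) (1, 0)) t := by
  have hc : HasDerivAt (fun s : ℝ => ((s, x) : ℝ × ℝ)) ((1 : ℝ), (0 : ℝ)) t :=
    (hasDerivAt_id t).prodMk (hasDerivAt_const t x)
  exact (hG (t, x)).hasFDerivAt.comp_hasDerivAt t hc

/-- decay of the mean, `∫ u(t) = e^{-λt} ∫ u(0)`. -/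
theorem stmt_3 (lam α β γ Γ : ℝ) (u : ℝ → ℝ → ℝ)
    (hu : ContDiff ℝ 3 (Function.uncurry u))
    (heq : ∀ t x : ℝ,
      pt u t x - px (px (pt u)) t x + 3 * u t x * px u t x
          + lam * (u t x - px (px u) t x)
        = 2 * px u t x * px (px u) t x + u t x * px (px (px u)) t x
          + α * px u t x + β * (u t x) ^ 2 * px u t x + γ * (u t x) ^ 3 * px u t x
          + Γ * px (px (px u)) t x)
    (hint : ∀ t : ℝ, 0 ≤ t → Integrable (fun x => u t x))
    (hintt : ∀ t : ℝ, 0 ≤ t → Integrable (fun x => pt u t x))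
    (hfluxTop : ∀ t : ℝ, 0 ≤ t → Tendsto (fun x => Phi lam α β γ Γ u t x) atTop (nhds 0))
    (hfluxBot : ∀ t : ℝ, 0 ≤ t → Tendsto (fun x => Phi lam α β γ Γ u t x) atBot (nhds 0))
    (hfluxInt : ∀ t : ℝ, 0 ≤ t →
      Integrable (fun x => deriv (fun y => Phi lam α β γ Γ u t y) x))
    (hdiff : ∀ t : ℝ, 0 ≤ t →
      HasDerivAt (fun s => ∫ x : ℝ, u s x) (∫ x : ℝ, pt u t x) t) :
    ∀ t : ℝ, 0 ≤ t → (∫ x : ℝ, u t x) = Real.exp (-lam * t) * ∫ x : ℝ, u 0 x := by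
  set U : ℝ × ℝ → ℝ := Function.uncurry u with hU
  have hUd : Differentiable ℝ U := hu.differentiable (by norm_num)
  set F1 : ℝ × ℝ → ℝ := fun p => fderiv ℝ U p (1, 0) with hF1def
  set F2 : ℝ × ℝ → ℝ := fun p => fderiv ℝ U p (0, 1) with hF2def
  have hfd : ContDiff ℝ 2 (fun p => fderiv ℝ U p) := hu.fderiv_right (by norm_num)
  have hF1 : ContDiff ℝ 2 F1 := hfd.clm_apply contDiff_const
  have hF2 : ContDiff ℝ 2 F2 := hfd.clm_apply contDiff_const
  set F12 : ℝ × ℝ → ℝ := fun p => fderiv ℝ F1 p (0, 1) with hF12def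
  set F22 : ℝ × ℝ → ℝ := fun p => fderiv ℝ F2 p (0, 1) with hF22def
  have hF12 : ContDiff ℝ 1 F12 := (hF1.fderiv_right (by norm_num)).clm_apply contDiff_const
  have hF22 : ContDiff ℝ 1 F22 := (hF2.fderiv_right (by norm_num)).clm_apply contDiff_const
  -- identification of partial derivatives
  have e1 : ∀ t x : ℝ, pt u t x = F1 (t, x) := fun t x =>
    (keyt U hUd t x).deriv
  have e2 : ∀ t x : ℝ, px u t x = F2 (t, x) := fun t x =>
    (keyx U hUd t x).deriv
  have Hpx : ∀ t x : ℝ, HasDerivAt (fun y => px u t y) (F22 (t, x)) x := by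
    intro t x
    have := keyx F2 (hF2.differentiable (by norm_num)) t x
    exact this.congr_of_eventuallyEq (Filter.Eventually.of_forall fun y => (e2 t y))
  have e22 : ∀ t x : ℝ, px (px u) t x = F22 (t, x) := fun t x => (Hpx t x).deriv
  have Hpt : ∀ t x : ℝ, HasDerivAt (fun y => pt u t y) (F12 (t, x)) x := by
    intro t x
    have := keyx F1 (hF1.differentiable (by norm_num)) t x
    exact this.congr_of_eventuallyEq (Filter.Eventually.of_forall fun y => (e1 t y))
  have e12 : ∀ t x : ℝ, px (pt u) t x = F12 (t, x) := fun t x => (Hpt t x).deriv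
  have Hpxx : ∀ t x : ℝ, HasDerivAt (fun y => px (px u) t y)
      (fderiv ℝ F22 (t, x) (0, 1)) x := by
    intro t x
    have := keyx F22 (hF22.differentiable (by norm_num)) t x
    exact this.congr_of_eventuallyEq (Filter.Eventually.of_forall fun y => (e22 t y))
  have e222 : ∀ t x : ℝ, px (px (px u)) t x = fderiv ℝ F22 (t, x) (0, 1) :=
    fun t x => (Hpxx t x).deriv
  have Hptx : ∀ t x : ℝ, HasDerivAt (fun y => px (pt u) t y)
      (fderiv ℝ F12 (t, x) (0, 1)) x := by
    intro t x
    have := keyx F12 (hF12.differentiable (by norm_num)) t x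
    exact this.congr_of_eventuallyEq (Filter.Eventually.of_forall fun y => (e12 t y))
  have e122 : ∀ t x : ℝ, px (px (pt u)) t x = fderiv ℝ F12 (t, x) (0, 1) :=
    fun t x => (Hptx t x).deriv
  -- derivative of the flux
  have Hu : ∀ t x : ℝ, HasDerivAt (fun y => u t y) (px u t x) x := by
    intro t x
    rw [e2]
    exact keyx U hUd t x
  have Hpx' : ∀ t x : ℝ, HasDerivAt (fun y => px u t y) (px (px u) t x) x := by
    intro t x; rw [e22]; exact Hpx t x
  have Hpxx' : ∀ t x : ℝ, HasDerivAt (fun y => px (px u) t y) (px (px (px u)) t x) x := by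
    intro t x; rw [e222]; exact Hpxx t x
  have Hptx' : ∀ t x : ℝ, HasDerivAt (fun y => px (pt u) t y) (px (px (pt u)) t x) x := by
    intro t x; rw [e122]; exact Hptx t x
  have HPhi : ∀ t x : ℝ, HasDerivAt (fun y => Phi lam α β γ Γ u t y)
      (3 / 2 * (2 * u t x * px u t x) - px (px (pt u)) t x
        - (px u t x * px (px u) t x + u t x * px (px (px u)) t x)
        - 1 / 2 * (2 * px u t x * px (px u) t x) - α * px u t x
        - β / 3 * (3 * (u t x) ^ 2 * px u t x)
        - γ / 4 * (4 * (u t x) ^ 3 * px u t x)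
        - Γ * px (px (px u)) t x - lam * px (px u) t x) x := by
    intro t x
    have h1 := ((Hu t x).pow 2).const_mul (3 / 2 : ℝ)
    have h2 := Hptx' t x
    have h3 := (Hu t x).mul (Hpxx' t x)
    have h4 := ((Hpx' t x).pow 2).const_mul (1 / 2 : ℝ)
    have h5 := (Hu t x).const_mul α
    have h6 := ((Hu t x).pow 3).const_mul (β / 3 : ℝ)
    have h7 := ((Hu t x).pow 4).const_mul (γ / 4 : ℝ)
    have h8 := (Hpxx' t x).const_mul Γ
    have h9 := (Hpx' t x).const_mul lam
    have H := ((((((((h1.sub h2).sub h3).sub h4).sub h5).sub h6).sub h7).sub h8).sub h9)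
    have : (fun y => Phi lam α β γ Γ u t y) = fun y =>
        (3 / 2) * (u t y) ^ 2 - px (pt u) t y - u t y * px (px u) t y
          - (1 / 2) * (px u t y) ^ 2 - α * u t y - (β / 3) * (u t y) ^ 3
          - (γ / 4) * (u t y) ^ 4 - Γ * px (px u) t y - lam * px u t y := rfl
    rw [this]
    refine H.congr_deriv ?_
    ring
  -- pointwise: pt u = -lam u - deriv Phi
  have hpt_eq : ∀ t x : ℝ, pt u t x
      = -lam * u t x - deriv (fun y => Phi lam α β γ Γ u t y) x := by
    intro t x
    rw [(HPhi t x).deriv]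
    linear_combination heq t x
  -- integral of deriv of flux is zero
  have hfluxzero : ∀ t : ℝ, 0 ≤ t →
      (∫ x : ℝ, deriv (fun y => Phi lam α β γ Γ u t y) x) = 0 := by
    intro t ht
    have hder : ∀ x : ℝ, HasDerivAt (fun y => Phi lam α β γ Γ u t y)
        (deriv (fun y => Phi lam α β γ Γ u t y) x) x :=
      fun x => (HPhi t x).differentiableAt.hasDerivAt
    have := integral_of_hasDerivAt_of_tendsto hder (hfluxInt t ht)
      (hfluxBot t ht) (hfluxTop t ht)
    simpa using this
  -- the ODE for the mean
  have hmean : ∀ t : ℝ, 0 ≤ t →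
      (∫ x : ℝ, pt u t x) = -lam * ∫ x : ℝ, u t x := by
    intro t ht
    have : (fun x => pt u t x) =
        fun x => -lam * u t x - deriv (fun y => Phi lam α β γ Γ u t y) x :=
      funext fun x => hpt_eq t x
    rw [this, integral_sub ((hint t ht).const_mul (-lam)) (hfluxInt t ht),
      integral_const_mul, hfluxzero t ht, sub_zero]
  set I : ℝ → ℝ := fun s => ∫ x : ℝ, u s x with hI
  have hODE : ∀ s : ℝ, 0 ≤ s → HasDerivAt I (-lam * I s) s := by
    intro s hs
    have := hdiff s hs
    rwa [hmean s hs] at this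
  intro t ht
  -- g s = exp(lam s) * I s is constant on [0, t]
  set g : ℝ → ℝ := fun s => Real.exp (lam * s) * I s with hg
  have hgd : ∀ s : ℝ, 0 ≤ s → HasDerivAt g 0 s := by
    intro s hs
    have hlin : HasDerivAt (fun r : ℝ => lam * r) lam s := by
      simpa using (hasDerivAt_id s).const_mul lam
    have he : HasDerivAt (fun r => Real.exp (lam * r)) (Real.exp (lam * s) * lam) s := hlin.exp
    have := he.mul (hODE s hs)
    refine this.congr_deriv ?_
    ring
  have hconst : g t = g 0 := by
    rcases eq_or_lt_of_le ht with h | h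
    · rw [← h]
    · exact constant_of_has_deriv_right_zero
        (fun x hx => ((hgd x hx.1).continuousAt).continuousWithinAt)
        (fun x hx => ((hgd x hx.1).hasDerivWithinAt)) t ⟨ht, le_rfl⟩
  have : Real.exp (lam * t) * I t = I 0 := by
    have h0 : g 0 = I 0 := by simp [hg]
    rw [← h0, ← hconst]
  calc I t = Real.exp (-lam * t) * (Real.exp (lam * t) * I t) := by
        rw [← mul_assoc, ← Real.exp_add]; ring_nf; simp
    _ = Real.exp (-lam * t) * I 0 := by rw [this]
end

section
/- Let u : ℝ × ℝ → ℝ, u = u(t,x), be a C³ solution of the dissipative Camassa–Holm-type equation and set m := u - u_{xx} and m₀(x) := m(0,x), u₀(x) := u(0,x). Assume that for every t ≥ 0: the functions x ↦ u(t,x), x ↦ ∂_t u(t,x) and x ↦ u_{xx}(t,x) are integrable on ℝ; u_x(t,x) → 0 as x → ±∞; the flux Φ(t,x) := (3/2)u² - u_{tx} - u u_{xx} - (1/2)u_x² - α u - (β/3)u³ - (γ/4)u⁴ - Γ u_{xx} - λ u_x tends to 0 as x → ±∞ and x ↦ ∂_x Φ(t,x) is integrable; and t ↦ ∫_ℝ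 u(t,x) dx is differentiable with derivative ∫_ℝ ∂_t u(t,x) dx. Then for all t ≥ 0: e^{-λ t}∫_ℝ m₀(x) dx = ∫_ℝ m(t,x) dx = ∫_ℝ u(t,x) dx = e^{-λ t}∫_ℝ u₀(x) dx. -/
open MeasureTheory Filter

lemma aux_hasDerivAt_fderiv (v : ℝ → ℝ → ℝ) {n : WithTop ℕ∞} (hv : ContDiff ℝ n (Function.uncurry v))
    (hn : 1 ≤ n) (t x : ℝ) :
    HasDerivAt (fun y => v t y) (fderiv ℝ (Function.uncurry v) (t, x) (0, 1)) x := by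
  have h1 : HasFDerivAt (Function.uncurry v) (fderiv ℝ (Function.uncurry v) (t, x)) (t, x) :=
    ((hv.differentiable (lt_of_lt_of_le zero_lt_one hn).ne') (t, x)).hasFDerivAt
  have h2 : HasDerivAt (fun y => ((t, y) : ℝ × ℝ)) ((0 : ℝ), (1 : ℝ)) x :=
    (hasDerivAt_const x t).prodMk (hasDerivAt_id x)
  exact h1.comp_hasDerivAt x h2

lemma px_eq_fderiv (v : ℝ → ℝ → ℝ) {n : WithTop ℕ∞} (hv : ContDiff ℝ n (Function.uncurry v))
    (hn : 1 ≤ n) (t x : ℝ) :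
    px v t x = fderiv ℝ (Function.uncurry v) (t, x) (0, 1) :=
  (aux_hasDerivAt_fderiv v hv hn t x).deriv

lemma hasDerivAt_px (v : ℝ → ℝ → ℝ) {n : WithTop ℕ∞} (hv : ContDiff ℝ n (Function.uncurry v))
    (hn : 1 ≤ n) (t x : ℝ) : HasDerivAt (fun y => v t y) (px v t x) x := by
  rw [px_eq_fderiv v hv hn]; exact aux_hasDerivAt_fderiv v hv hn t x

lemma hasDerivAt_pt (v : ℝ → ℝ → ℝ) {n : WithTop ℕ∞} (hv : ContDiff ℝ n (Function.uncurry v))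
    (hn : 1 ≤ n) (t x : ℝ) : HasDerivAt (fun s => v s x) (pt v t x) t := by
  have h1 : HasFDerivAt (Function.uncurry v) (fderiv ℝ (Function.uncurry v) (t, x)) (t, x) :=
    ((hv.differentiable (lt_of_lt_of_le zero_lt_one hn).ne') (t, x)).hasFDerivAt
  have h2 : HasDerivAt (fun s => ((s, x) : ℝ × ℝ)) ((1 : ℝ), (0 : ℝ)) t :=
    (hasDerivAt_id t).prodMk (hasDerivAt_const t x)
  have hd : HasDerivAt (fun s => v s x) (fderiv ℝ (Function.uncurry v) (t, x) (1, 0)) t := by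
    exact h1.comp_hasDerivAt t h2
  have h : pt v t x = fderiv ℝ (Function.uncurry v) (t, x) (1, 0) := hd.deriv
  rw [h]; exact hd

lemma pt_eq_fderiv (v : ℝ → ℝ → ℝ) {n : WithTop ℕ∞} (hv : ContDiff ℝ n (Function.uncurry v))
    (hn : 1 ≤ n) (t x : ℝ) :
    pt v t x = fderiv ℝ (Function.uncurry v) (t, x) (1, 0) := by
  have h1 : HasFDerivAt (Function.uncurry v) (fderiv ℝ (Function.uncurry v) (t, x)) (t, x) :=
    ((hv.differentiable (lt_of_lt_of_le zero_lt_one hn).ne') (t, x)).hasFDerivAt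
  have h2 : HasDerivAt (fun s => ((s, x) : ℝ × ℝ)) ((1 : ℝ), (0 : ℝ)) t :=
    (hasDerivAt_id t).prodMk (hasDerivAt_const t x)
  exact (h1.comp_hasDerivAt t h2).deriv

lemma contDiff_px (v : ℝ → ℝ → ℝ) {m n : WithTop ℕ∞} (hv : ContDiff ℝ n (Function.uncurry v))
    (hn : m + 1 ≤ n) : ContDiff ℝ m (Function.uncurry (px v)) := by
  have h1 : (1 : WithTop ℕ∞) ≤ n := le_trans (le_add_self) hn
  have h : Function.uncurry (px v) = fun p : ℝ × ℝ => fderiv ℝ (Function.uncurry v) p (0, 1) := by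
    funext p
    exact px_eq_fderiv v hv h1 p.1 p.2
  rw [h]
  exact (hv.fderiv_right hn).clm_apply contDiff_const

lemma contDiff_pt (v : ℝ → ℝ → ℝ) {m n : WithTop ℕ∞} (hv : ContDiff ℝ n (Function.uncurry v))
    (hn : m + 1 ≤ n) : ContDiff ℝ m (Function.uncurry (pt v)) := by
  have h1 : (1 : WithTop ℕ∞) ≤ n := le_trans (le_add_self) hn
  have h : Function.uncurry (pt v) = fun p : ℝ × ℝ => fderiv ℝ (Function.uncurry v) p (1, 0) := by
    funext p
    exact pt_eq_fderiv v hv h1 p.1 p.2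
  rw [h]
  exact (hv.fderiv_right hn).clm_apply contDiff_const

/-- with `m = u - u_xx`,
`e^{-λt}∫ m₀ = ∫ m(t) = ∫ u(t) = e^{-λt}∫ u₀` (Theorem 1.3 of the paper). -/
theorem stmt_5 (lam α β γ Γ : ℝ) (u : ℝ → ℝ → ℝ)
    (hu : ContDiff ℝ 3 (Function.uncurry u))
    (heq : ∀ t x : ℝ,
      pt u t x - px (px (pt u)) t x + 3 * u t x * px u t x
          + lam * (u t x - px (px u) t x)
        = 2 * px u t x * px (px u) t x + u t x * px (px (px u)) t x
          + α * px u t x + β * (u t x) ^ 2 * px u t x + γ * (u t x) ^ 3 * px u t x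
          + Γ * px (px (px u)) t x)
    (hint : ∀ t : ℝ, 0 ≤ t → Integrable (fun x => u t x))
    (hintt : ∀ t : ℝ, 0 ≤ t → Integrable (fun x => pt u t x))
    (hintxx : ∀ t : ℝ, 0 ≤ t → Integrable (fun x => px (px u) t x))
    (huxTop : ∀ t : ℝ, 0 ≤ t → Tendsto (fun x => px u t x) atTop (nhds 0))
    (huxBot : ∀ t : ℝ, 0 ≤ t → Tendsto (fun x => px u t x) atBot (nhds 0))
    (hfluxTop : ∀ t : ℝ, 0 ≤ t → Tendsto (fun x => Phi lam α β γ Γ u t x) atTop (nhds 0))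
    (hfluxBot : ∀ t : ℝ, 0 ≤ t → Tendsto (fun x => Phi lam α β γ Γ u t x) atBot (nhds 0))
    (hfluxInt : ∀ t : ℝ, 0 ≤ t →
      Integrable (fun x => deriv (fun y => Phi lam α β γ Γ u t y) x))
    (hdiff : ∀ t : ℝ, 0 ≤ t →
      HasDerivAt (fun s => ∫ x : ℝ, u s x) (∫ x : ℝ, pt u t x) t) :
    ∀ t : ℝ, 0 ≤ t →
      Real.exp (-lam * t) * (∫ x : ℝ, (u 0 x - px (px u) 0 x))
          = (∫ x : ℝ, (u t x - px (px u) t x))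
        ∧ (∫ x : ℝ, (u t x - px (px u) t x)) = (∫ x : ℝ, u t x)
        ∧ (∫ x : ℝ, u t x) = Real.exp (-lam * t) * ∫ x : ℝ, u 0 x := by
    -- regularity of the partial derivatives
  have hux : ContDiff ℝ 2 (Function.uncurry (px u)) := contDiff_px u hu (by norm_num)
  have hut : ContDiff ℝ 2 (Function.uncurry (pt u)) := contDiff_pt u hu (by norm_num)
  have huxx : ContDiff ℝ 1 (Function.uncurry (px (px u))) := contDiff_px (px u) hux (by norm_num)
  have hutx : ContDiff ℝ 1 (Function.uncurry (px (pt u))) := contDiff_px (pt u) hut (by norm_num)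
  -- derivative of the flux
  have hPhi : ∀ t x : ℝ, HasDerivAt (fun y => Phi lam α β γ Γ u t y)
      (-(pt u t x) - lam * u t x) x := by
    intro t x
    have dU : HasDerivAt (fun y => u t y) (px u t x) x :=
      hasDerivAt_px u hu (by norm_num) t x
    have dUx : HasDerivAt (fun y => px u t y) (px (px u) t x) x :=
      hasDerivAt_px (px u) hux (by norm_num) t x
    have dUxx : HasDerivAt (fun y => px (px u) t y) (px (px (px u)) t x) x :=
      hasDerivAt_px (px (px u)) huxx (by norm_num) t x
    have dVx : HasDerivAt (fun y => px (pt u) t y) (px (px (pt u)) t x) x :=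
      hasDerivAt_px (px (pt u)) hutx (by norm_num) t x
    have h := (((((((((HasDerivAt.const_mul ((3:ℝ)/2) (dU.pow 2)).sub dVx).sub
      (dU.mul dUxx)).sub (HasDerivAt.const_mul ((1:ℝ)/2) (dUx.pow 2))).sub
      (HasDerivAt.const_mul α dU)).sub (HasDerivAt.const_mul (β/3) (dU.pow 3))).sub
      (HasDerivAt.const_mul (γ/4) (dU.pow 4))).sub
      (HasDerivAt.const_mul Γ dUxx)).sub (HasDerivAt.const_mul lam dUx))
    have hfun : (fun y => Phi lam α β γ Γ u t y)
        = fun y => (3 / 2) * (u t y) ^ 2 - px (pt u) t y - u t y * px (px u) t y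
          - (1 / 2) * (px u t y) ^ 2 - α * u t y - (β / 3) * (u t y) ^ 3
          - (γ / 4) * (u t y) ^ 4 - Γ * px (px u) t y - lam * px u t y := rfl
    rw [hfun]
    refine h.congr_deriv ?_
    have h2 := heq t x
    norm_num
    linarith
  have hderivPhi : ∀ t x : ℝ, deriv (fun y => Phi lam α β γ Γ u t y) x
      = -(pt u t x) - lam * u t x := fun t x => (hPhi t x).deriv
  -- integral of u_xx vanishes
  have hxx0 : ∀ t : ℝ, 0 ≤ t → (∫ x : ℝ, px (px u) t x) = 0 := by
    intro t ht
    have := integral_of_hasDerivAt_of_tendsto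
      (f := fun y => px u t y) (f' := fun x => px (px u) t x)
      (fun x => hasDerivAt_px (px u) hux (by norm_num) t x)
      (hintxx t ht) (huxBot t ht) (huxTop t ht)
    simpa using this
  -- integral of the flux derivative vanishes
  have hflux0 : ∀ t : ℝ, 0 ≤ t →
      (∫ x : ℝ, deriv (fun y => Phi lam α β γ Γ u t y) x) = 0 := by
    intro t ht
    have := integral_of_hasDerivAt_of_tendsto
      (f := fun y => Phi lam α β γ Γ u t y)
      (f' := fun x => deriv (fun y => Phi lam α β γ Γ u t y) x)
      (fun x => by simpa only [hderivPhi t x] using hPhi t x)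
      (hfluxInt t ht) (hfluxBot t ht) (hfluxTop t ht)
    simpa using this
  -- ∫ m = ∫ u
  have hmu : ∀ t : ℝ, 0 ≤ t →
      (∫ x : ℝ, (u t x - px (px u) t x)) = ∫ x : ℝ, u t x := by
    intro t ht
    rw [integral_sub (hint t ht) (hintxx t ht), hxx0 t ht, sub_zero]
  -- ODE for F(t) = ∫ u t
  set F : ℝ → ℝ := fun s => ∫ x : ℝ, u s x with hFdef
  have hIpt : ∀ t : ℝ, 0 ≤ t → (∫ x : ℝ, pt u t x) = -lam * F t := by
    intro t ht
    have e : (fun x => pt u t x)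
        = fun x => (-lam) * u t x - deriv (fun y => Phi lam α β γ Γ u t y) x := by
      funext x; rw [hderivPhi t x]; ring
    calc (∫ x : ℝ, pt u t x)
        = ∫ x : ℝ, ((-lam) * u t x - deriv (fun y => Phi lam α β γ Γ u t y) x) := by rw [e]
      _ = (∫ x : ℝ, (-lam) * u t x) - ∫ x : ℝ, deriv (fun y => Phi lam α β γ Γ u t y) x :=
        integral_sub ((hint t ht).const_mul (-lam)) (hfluxInt t ht)
      _ = -lam * F t := by rw [hflux0 t ht, integral_const_mul, sub_zero]
  have hF : ∀ s : ℝ, 0 ≤ s → HasDerivAt F (-lam * F s) s := by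
    intro s hs
    have := hdiff s hs
    rwa [hIpt s hs] at this
  -- exponential trick
  have hFt : ∀ t : ℝ, 0 ≤ t → F t = Real.exp (-lam * t) * F 0 := by
    intro t ht
    set G : ℝ → ℝ := fun s => Real.exp (lam * s) * F s with hGdef
    have hGd : ∀ s : ℝ, 0 ≤ s → HasDerivAt G 0 s := by
      intro s hs
      have h1 : HasDerivAt (fun r : ℝ => Real.exp (lam * r)) (lam * Real.exp (lam * s)) s := by
        have h0 : HasDerivAt (fun r : ℝ => lam * r) lam s := by
          simpa using (hasDerivAt_id s).const_mul lam
        exact h0.exp.congr_deriv (mul_comm _ _)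
      have := h1.mul (hF s hs)
      refine this.congr_deriv ?_
      ring
    have hconst := constant_of_has_deriv_right_zero
      (f := G) (a := 0) (b := t)
      (fun s hs => (hGd s hs.1).continuousAt.continuousWithinAt)
      (fun s hs => (hGd s hs.1).hasDerivWithinAt)
    have hGt : G t = G 0 := hconst t ⟨ht, le_rfl⟩
    have hGt' : Real.exp (lam * t) * F t = F 0 := by
      simpa [hGdef] using hGt
    have h2 : Real.exp (-lam * t) * (Real.exp (lam * t) * F t)
        = Real.exp (-lam * t) * F 0 := by rw [hGt']
    rwa [← mul_assoc, ← Real.exp_add, (by ring : -lam * t + lam * t = 0),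
      Real.exp_zero, one_mul] at h2
  intro t ht
  refine ⟨?_, hmu t ht, hFt t ht⟩
  rw [hmu 0 le_rfl, hmu t ht]
  exact (hFt t ht).symm
end
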